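/- Let X = ℝⁿ and let μ₁ = a₁δ_{x₁}, μ₂ = a₂δ_{x₂} with a₁, a₂ > 0 and |x₁ − x₂| = π/2. Then the Hellinger curve μᴴ(s) := (1−s)²a₁δ_{x₁} + s²a₂δ_{x₂}, s ∈ [0,1], satisfies HK(μᴴ(s), μᴴ(t)) = |s − t|·HK(μ₁, μ₂) for all s, t ∈ [0,1]; i.e., it is a constant-speed geodesic in (𝓜(ℝⁿ), HK). -/

import Mathlib

open Real MeasureTheory ENNReal

/-- Squared cone distance `d_𝔠²([x₁,r₁],[x₂,r₂]) = r₁² + r₂² − 2r₁r₂ cos(min(d(x₁,x₂),π))`,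
on representatives in `X × ℝ`. -/
noncomputable def coneCost {X : Type*} [MetricSpace X] (p q : X × ℝ) : ℝ :=
  p.2 ^ 2 + q.2 ^ 2 - 2 * p.2 * q.2 * Real.cos (min (dist p.1 q.1) π)

/-- First homogeneous marginal `𝔥₁²α = (x₁)_#(r₁² α)` of a plan on the (squared) cone. -/
noncomputable def hmarg1 {X : Type*} [MeasurableSpace X]
    (α : Measure ((X × ℝ) × (X × ℝ))) : Measure X :=
  Measure.map (fun p => p.1.1) (α.withDensity fun p => ENNReal.ofReal (p.1.2 ^ 2))

/-- Second homogeneous marginal `𝔥₂²α = (x₂)_#(r₂² α)`. -/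
noncomputable def hmarg2 {X : Type*} [MeasurableSpace X]
    (α : Measure ((X × ℝ) × (X × ℝ))) : Measure X :=
  Measure.map (fun p => p.2.1) (α.withDensity fun p => ENNReal.ofReal (p.2.2 ^ 2))

/-- The squared Hellinger–Kantorovich distance:
`HK²(μ₁,μ₂) = inf { ∫ d_𝔠²(η₁,η₂) dα : 𝔥ᵢ²α = μᵢ }`. -/
noncomputable def HK2 {X : Type*} [MetricSpace X] [MeasurableSpace X]
    (μ ν : Measure X) : ℝ≥0∞ :=
  ⨅ (α : Measure ((X × ℝ) × (X × ℝ))) (_ : hmarg1 α = μ) (_ : hmarg2 α = ν),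
    ∫⁻ p, ENNReal.ofReal (coneCost p.1 p.2) ∂α

/-- The Hellinger curve `μᴴ(s) = (1−s)²a₁δ_{x₁} + s²a₂δ_{x₂}`. -/
noncomputable def hellingerCurve {n : ℕ} (x₁ x₂ : EuclideanSpace ℝ (Fin n))
    (a₁ a₂ s : ℝ) : Measure (EuclideanSpace ℝ (Fin n)) :=
  ENNReal.ofReal ((1 - s) ^ 2 * a₁) • Measure.dirac x₁ +
    ENNReal.ofReal (s ^ 2 * a₂) • Measure.dirac x₂

/- Auxiliary lemmas -/


private abbrev Pn (n : ℕ) :=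
  (EuclideanSpace ℝ (Fin n) × ℝ) × (EuclideanSpace ℝ (Fin n) × ℝ)

lemma dirac_withDensity' {P : Type*} [MeasurableSpace P] (z : P) {f : P → ℝ≥0∞}
    (hf : Measurable f) :
    (Measure.dirac z).withDensity f = f z • Measure.dirac z := by
  ext s hs
  classical
  rw [withDensity_apply _ hs, setLIntegral_dirac' hf hs, Measure.smul_apply, smul_eq_mul,
    Measure.dirac_apply' _ hs, Set.indicator_apply]
  split_ifs <;> simp

lemma cross_term_le {X : Type*} [MetricSpace X] (p q : X × ℝ) :
    2 * p.2 * q.2 * Real.cos (min (dist p.1 q.1) π) ≤ 2 * |p.2| * |q.2| := by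
  have h1 : |2 * p.2 * q.2 * Real.cos (min (dist p.1 q.1) π)| ≤ 2 * |p.2| * |q.2| := by
    rw [abs_mul, abs_mul, abs_mul]
    have hcos : |Real.cos (min (dist p.1 q.1) π)| ≤ 1 := Real.abs_cos_le_one _
    have : |(2 : ℝ)| = 2 := by norm_num
    rw [this]
    calc 2 * |p.2| * |q.2| * |Real.cos (min (dist p.1 q.1) π)| ≤ 2 * |p.2| * |q.2| * 1 := by
          apply mul_le_mul_of_nonneg_left hcos; positivity
      _ = 2 * |p.2| * |q.2| := by ring
  exact (le_abs_self _).trans h1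

lemma coneCost_nonneg {X : Type*} [MetricSpace X] (p q : X × ℝ) : 0 ≤ coneCost p q := by
  have h := cross_term_le p q
  have := sq_nonneg (|p.2| - |q.2|)
  have h1 : |p.2| ^ 2 = p.2 ^ 2 := sq_abs _
  have h2 : |q.2| ^ 2 = q.2 ^ 2 := sq_abs _
  unfold coneCost
  nlinarith

lemma coneCost_ge {X : Type*} [MetricSpace X] (p q : X × ℝ) :
    p.2 ^ 2 + q.2 ^ 2 ≤ coneCost p q + 2 * |p.2| * |q.2| := by
  have h := cross_term_le p q
  unfold coneCost
  linarith

/-- Hölder / Cauchy–Schwarz step. -/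
lemma cross_integral_le {P : Type*} [MeasurableSpace P] (μ : Measure P)
    (F G : P → ℝ) (hF : Measurable F) (hG : Measurable G) (c d : ℝ)
    (hc : 0 ≤ c) (hd : 0 ≤ d)
    (hFc : ∫⁻ p, ENNReal.ofReal (F p ^ 2) ∂μ ≤ ENNReal.ofReal c)
    (hGd : ∫⁻ p, ENNReal.ofReal (G p ^ 2) ∂μ ≤ ENNReal.ofReal d) :
    ∫⁻ p, ENNReal.ofReal (2 * |F p| * |G p|) ∂μ ≤
      ENNReal.ofReal (2 * Real.sqrt c * Real.sqrt d) := by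
  have conj : Real.HolderConjugate 2 2 := Real.HolderConjugate.two_two
  have hmF : AEMeasurable (fun p => ENNReal.ofReal |F p|) μ := by fun_prop
  have hmG : AEMeasurable (fun p => ENNReal.ofReal |G p|) μ := by fun_prop
  have holder := ENNReal.lintegral_mul_le_Lp_mul_Lq μ conj hmF hmG
  have hsq : ∀ x : ℝ, (ENNReal.ofReal |x|) ^ (2 : ℝ) = ENNReal.ofReal (x ^ 2) := by
    intro x
    rw [ENNReal.ofReal_rpow_of_nonneg (abs_nonneg x) (by norm_num : (0:ℝ) ≤ 2)]
    congr 1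
    rw [show ((2 : ℝ)) = ((2 : ℕ) : ℝ) by norm_num, Real.rpow_natCast, sq_abs]
  have e1 : ∫⁻ p, (ENNReal.ofReal |F p|) ^ (2 : ℝ) ∂μ ≤ ENNReal.ofReal c := by
    simpa only [hsq] using hFc
  have e2 : ∫⁻ p, (ENNReal.ofReal |G p|) ^ (2 : ℝ) ∂μ ≤ ENNReal.ofReal d := by
    simpa only [hsq] using hGd
  have hpow1 : (∫⁻ p, (ENNReal.ofReal |F p|) ^ (2 : ℝ) ∂μ) ^ (1 / (2 : ℝ)) ≤
      ENNReal.ofReal (Real.sqrt c) := by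
    rw [Real.sqrt_eq_rpow, ← ENNReal.ofReal_rpow_of_nonneg hc (by norm_num)]
    exact ENNReal.rpow_le_rpow e1 (by norm_num)
  have hpow2 : (∫⁻ p, (ENNReal.ofReal |G p|) ^ (2 : ℝ) ∂μ) ^ (1 / (2 : ℝ)) ≤
      ENNReal.ofReal (Real.sqrt d) := by
    rw [Real.sqrt_eq_rpow, ← ENNReal.ofReal_rpow_of_nonneg hd (by norm_num)]
    exact ENNReal.rpow_le_rpow e2 (by norm_num)
  calc ∫⁻ p, ENNReal.ofReal (2 * |F p| * |G p|) ∂μ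
      = ∫⁻ p, 2 * (ENNReal.ofReal |F p| * ENNReal.ofReal |G p|) ∂μ := by
        congr 1; funext p
        rw [← ENNReal.ofReal_mul (abs_nonneg _), ← ENNReal.ofReal_ofNat 2,
          ← ENNReal.ofReal_mul (by norm_num)]
        ring_nf
    _ = 2 * ∫⁻ p, (fun q => ENNReal.ofReal |F q|) p * (fun q => ENNReal.ofReal |G q|) p ∂μ := by
        rw [← lintegral_const_mul' _ _ (by norm_num : (2:ℝ≥0∞) ≠ ⊤)]
    _ ≤ 2 * (ENNReal.ofReal (Real.sqrt c) * ENNReal.ofReal (Real.sqrt d)) := by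
        gcongr
        exact holder.trans (mul_le_mul' hpow1 hpow2)
    _ = ENNReal.ofReal (2 * Real.sqrt c * Real.sqrt d) := by
        rw [← ENNReal.ofReal_mul (Real.sqrt_nonneg _), ← ENNReal.ofReal_ofNat 2,
          ← ENNReal.ofReal_mul (by norm_num)]
        ring_nf

set_option maxHeartbeats 2000000 in
lemma HK2_two_point (n : ℕ) (x₁ x₂ : EuclideanSpace ℝ (Fin n)) (hd : dist x₁ x₂ = π / 2)
    (c₁ c₂ d₁ d₂ : ℝ) (hc₁ : 0 ≤ c₁) (hc₂ : 0 ≤ c₂) (hd₁ : 0 ≤ d₁) (hd₂ : 0 ≤ d₂) :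
    HK2 (ENNReal.ofReal c₁ • Measure.dirac x₁ + ENNReal.ofReal c₂ • Measure.dirac x₂)
      (ENNReal.ofReal d₁ • Measure.dirac x₁ + ENNReal.ofReal d₂ • Measure.dirac x₂) =
      ENNReal.ofReal
        ((Real.sqrt c₁ - Real.sqrt d₁) ^ 2 + (Real.sqrt c₂ - Real.sqrt d₂) ^ 2) := by
  classical
  have hpi := Real.pi_pos
  have hne : x₁ ≠ x₂ := fun h => by rw [h, dist_self] at hd; linarith
  have pi2 : π / 2 ≤ π := by linarith
  have hp1 : Measurable fun p : Pn n => p.1.1 := by fun_prop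
  have hp2 : Measurable fun p : Pn n => p.2.1 := by fun_prop
  have hmf : Measurable fun p : Pn n => ENNReal.ofReal (p.1.2 ^ 2) := by fun_prop
  have hmg : Measurable fun p : Pn n => ENNReal.ofReal (p.2.2 ^ 2) := by fun_prop
  have hmcost : Measurable fun p : Pn n => ENNReal.ofReal (coneCost p.1 p.2) := by
    apply Measurable.ennreal_ofReal; unfold coneCost; fun_prop
  set A : ℝ := (Real.sqrt c₁ - Real.sqrt d₁) ^ 2 + (Real.sqrt c₂ - Real.sqrt d₂) ^ 2 with hA
  refine le_antisymm ?_ ?_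
  · -- upper bound via an explicit plan
    set z₁ : Pn n := ((x₁, Real.sqrt c₁), (x₁, Real.sqrt d₁)) with hz₁
    set z₂ : Pn n := ((x₂, Real.sqrt c₂), (x₂, Real.sqrt d₂)) with hz₂
    set α₀ : Measure (Pn n) := Measure.dirac z₁ + Measure.dirac z₂ with hα₀
    have hm1 : hmarg1 α₀ =
        ENNReal.ofReal c₁ • Measure.dirac x₁ + ENNReal.ofReal c₂ • Measure.dirac x₂ := by
      rw [hmarg1, hα₀, withDensity_add_measure, dirac_withDensity' _ hmf,
        dirac_withDensity' _ hmf, Measure.map_add _ _ hp1, Measure.map_smul, Measure.map_smul,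
        Measure.map_dirac' hp1, Measure.map_dirac' hp1]
      simp [hz₁, hz₂, Real.sq_sqrt hc₁, Real.sq_sqrt hc₂]
    have hm2 : hmarg2 α₀ =
        ENNReal.ofReal d₁ • Measure.dirac x₁ + ENNReal.ofReal d₂ • Measure.dirac x₂ := by
      rw [hmarg2, hα₀, withDensity_add_measure, dirac_withDensity' _ hmg,
        dirac_withDensity' _ hmg, Measure.map_add _ _ hp2, Measure.map_smul, Measure.map_smul,
        Measure.map_dirac' hp2, Measure.map_dirac' hp2]
      simp [hz₁, hz₂, Real.sq_sqrt hd₁, Real.sq_sqrt hd₂]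
    have hcost : ∫⁻ p, ENNReal.ofReal (coneCost p.1 p.2) ∂α₀ = ENNReal.ofReal A := by
      rw [hα₀, lintegral_add_measure, lintegral_dirac' _ hmcost, lintegral_dirac' _ hmcost]
      have c11 : coneCost z₁.1 z₁.2 = (Real.sqrt c₁ - Real.sqrt d₁) ^ 2 := by
        simp only [hz₁, coneCost, dist_self]
        rw [min_eq_left hpi.le, Real.cos_zero]
        nlinarith [Real.sq_sqrt hc₁, Real.sq_sqrt hd₁]
      have c22 : coneCost z₂.1 z₂.2 = (Real.sqrt c₂ - Real.sqrt d₂) ^ 2 := by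
        simp only [hz₂, coneCost, dist_self]
        rw [min_eq_left hpi.le, Real.cos_zero]
        nlinarith [Real.sq_sqrt hc₂, Real.sq_sqrt hd₂]
      rw [c11, c22, hA, ENNReal.ofReal_add (sq_nonneg _) (sq_nonneg _)]
    calc HK2 (ENNReal.ofReal c₁ • Measure.dirac x₁ + ENNReal.ofReal c₂ • Measure.dirac x₂)
          (ENNReal.ofReal d₁ • Measure.dirac x₁ + ENNReal.ofReal d₂ • Measure.dirac x₂) ≤
        ∫⁻ p, ENNReal.ofReal (coneCost p.1 p.2) ∂α₀ :=
          iInf_le_of_le α₀ (iInf_le_of_le hm1 (iInf_le _ hm2))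
      _ = ENNReal.ofReal A := hcost
  · -- lower bound
    rw [HK2]
    refine le_iInf fun α => le_iInf fun hm1 => le_iInf fun hm2 => ?_
    set S₁ : Set (Pn n) := (fun p : Pn n => p.1.1) ⁻¹' {x₁} with hS₁def
    set S₂ : Set (Pn n) := (fun p : Pn n => p.1.1) ⁻¹' {x₂} with hS₂def
    set T₁ : Set (Pn n) := (fun p : Pn n => p.2.1) ⁻¹' {x₁} with hT₁def
    set T₂ : Set (Pn n) := (fun p : Pn n => p.2.1) ⁻¹' {x₂} with hT₂def
    have mS₁ : MeasurableSet S₁ := hp1 (measurableSet_singleton _)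
    have mS₂ : MeasurableSet S₂ := hp1 (measurableSet_singleton _)
    have mT₁ : MeasurableSet T₁ := hp2 (measurableSet_singleton _)
    have mT₂ : MeasurableSet T₂ := hp2 (measurableSet_singleton _)
    have ev1 : ∀ s : Set (EuclideanSpace ℝ (Fin n)), MeasurableSet s →
        ∫⁻ p in (fun p : Pn n => p.1.1) ⁻¹' s, ENNReal.ofReal (p.1.2 ^ 2) ∂α =
          (ENNReal.ofReal c₁ • Measure.dirac x₁ + ENNReal.ofReal c₂ • Measure.dirac x₂) s := by
      intro s hs
      conv_rhs => rw [← hm1]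
      rw [hmarg1, Measure.map_apply hp1 hs, withDensity_apply _ (hp1 hs)]
    have ev2 : ∀ s : Set (EuclideanSpace ℝ (Fin n)), MeasurableSet s →
        ∫⁻ p in (fun p : Pn n => p.2.1) ⁻¹' s, ENNReal.ofReal (p.2.2 ^ 2) ∂α =
          (ENNReal.ofReal d₁ • Measure.dirac x₁ + ENNReal.ofReal d₂ • Measure.dirac x₂) s := by
      intro s hs
      conv_rhs => rw [← hm2]
      rw [hmarg2, Measure.map_apply hp2 hs, withDensity_apply _ (hp2 hs)]
    have e1 : ∫⁻ p in S₁, ENNReal.ofReal (p.1.2 ^ 2) ∂α = ENNReal.ofReal c₁ := by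
      rw [hS₁def, ev1 {x₁} (measurableSet_singleton _)]
      simp [Measure.dirac_apply, hne.symm]
    have e2 : ∫⁻ p in S₂, ENNReal.ofReal (p.1.2 ^ 2) ∂α = ENNReal.ofReal c₂ := by
      rw [hS₂def, ev1 {x₂} (measurableSet_singleton _)]
      simp [Measure.dirac_apply, hne]
    have f1 : ∫⁻ p in T₁, ENNReal.ofReal (p.2.2 ^ 2) ∂α = ENNReal.ofReal d₁ := by
      rw [hT₁def, ev2 {x₁} (measurableSet_singleton _)]
      simp [Measure.dirac_apply, hne.symm]
    have f2 : ∫⁻ p in T₂, ENNReal.ofReal (p.2.2 ^ 2) ∂α = ENNReal.ofReal d₂ := by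
      rw [hT₂def, ev2 {x₂} (measurableSet_singleton _)]
      simp [Measure.dirac_apply, hne]
    have etot1 : ∫⁻ p, ENNReal.ofReal (p.1.2 ^ 2) ∂α = ENNReal.ofReal c₁ + ENNReal.ofReal c₂ := by
      have := ev1 Set.univ MeasurableSet.univ
      simpa [Measure.dirac_apply] using this
    have etot2 : ∫⁻ p, ENNReal.ofReal (p.2.2 ^ 2) ∂α = ENNReal.ofReal d₁ + ENNReal.ofReal d₂ := by
      have := ev2 Set.univ MeasurableSet.univ
      simpa [Measure.dirac_apply] using this
    have hcompl : MeasurableSet (({x₁, x₂} : Set (EuclideanSpace ℝ (Fin n)))ᶜ) :=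
      (((measurableSet_singleton x₁).union (measurableSet_singleton x₂))).compl
    have hAae : ∀ᵐ p ∂α, p.1.1 ≠ x₁ → p.1.1 ≠ x₂ → p.1.2 = 0 := by
      have e0 : ∫⁻ p in (fun p : Pn n => p.1.1) ⁻¹' ({x₁, x₂}ᶜ),
          ENNReal.ofReal (p.1.2 ^ 2) ∂α = 0 := by
        rw [ev1 _ hcompl]
        simp [Measure.dirac_apply]
      have h1 := (lintegral_eq_zero_iff hmf).mp e0
      have h2 := (ae_restrict_iff' (hp1 hcompl)).mp h1
      filter_upwards [h2] with p hp hx1 hx2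
      have hmem : p ∈ (fun p : Pn n => p.1.1) ⁻¹' ({x₁, x₂}ᶜ) := by simp [hx1, hx2]
      have h3 := hp hmem
      simp only [Pi.zero_apply, ENNReal.ofReal_eq_zero] at h3
      have h4 : p.1.2 ^ 2 = 0 := le_antisymm h3 (sq_nonneg _)
      exact (pow_eq_zero_iff two_ne_zero).mp h4
    have hBae : ∀ᵐ p ∂α, p.2.1 ≠ x₁ → p.2.1 ≠ x₂ → p.2.2 = 0 := by
      have e0 : ∫⁻ p in (fun p : Pn n => p.2.1) ⁻¹' ({x₁, x₂}ᶜ),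
          ENNReal.ofReal (p.2.2 ^ 2) ∂α = 0 := by
        rw [ev2 _ hcompl]
        simp [Measure.dirac_apply]
      have h1 := (lintegral_eq_zero_iff hmg).mp e0
      have h2 := (ae_restrict_iff' (hp2 hcompl)).mp h1
      filter_upwards [h2] with p hp hx1 hx2
      have hmem : p ∈ (fun p : Pn n => p.2.1) ⁻¹' ({x₁, x₂}ᶜ) := by simp [hx1, hx2]
      have h3 := hp hmem
      simp only [Pi.zero_apply, ENNReal.ofReal_eq_zero] at h3
      have h4 : p.2.2 ^ 2 = 0 := le_antisymm h3 (sq_nonneg _)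
      exact (pow_eq_zero_iff two_ne_zero).mp h4
    set D₁ : Set (Pn n) := S₁ ∩ T₁ with hD₁def
    set D₂ : Set (Pn n) := S₂ ∩ T₂ with hD₂def
    have mD : MeasurableSet (D₁ ∪ D₂) := (mS₁.inter mT₁).union (mS₂.inter mT₂)
    -- the Cauchy–Schwarz bounds on the diagonal cells
    have cross1 : ∫⁻ p in D₁, ENNReal.ofReal (2 * |p.1.2| * |p.2.2|) ∂α ≤
        ENNReal.ofReal (2 * Real.sqrt c₁ * Real.sqrt d₁) := by
      refine cross_integral_le (α.restrict D₁) (fun p => p.1.2) (fun p => p.2.2)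
        (by fun_prop) (by fun_prop) c₁ d₁ hc₁ hd₁ ?_ ?_
      · exact le_of_le_of_eq (lintegral_mono_set Set.inter_subset_left) e1
      · exact le_of_le_of_eq (lintegral_mono_set Set.inter_subset_right) f1
    have cross2 : ∫⁻ p in D₂, ENNReal.ofReal (2 * |p.1.2| * |p.2.2|) ∂α ≤
        ENNReal.ofReal (2 * Real.sqrt c₂ * Real.sqrt d₂) := by
      refine cross_integral_le (α.restrict D₂) (fun p => p.1.2) (fun p => p.2.2)
        (by fun_prop) (by fun_prop) c₂ d₂ hc₂ hd₂ ?_ ?_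
      · exact le_of_le_of_eq (lintegral_mono_set Set.inter_subset_left) e2
      · exact le_of_le_of_eq (lintegral_mono_set Set.inter_subset_right) f2
    -- the pointwise a.e. inequality
    have hae : ∀ᵐ p ∂α, ENNReal.ofReal (p.1.2 ^ 2) + ENNReal.ofReal (p.2.2 ^ 2) ≤
        ENNReal.ofReal (coneCost p.1 p.2) +
          (D₁ ∪ D₂).indicator (fun p : Pn n => ENNReal.ofReal (2 * |p.1.2| * |p.2.2|)) p := by
      filter_upwards [hAae, hBae] with p hpA hpB
      have hfg : ENNReal.ofReal (p.1.2 ^ 2) + ENNReal.ofReal (p.2.2 ^ 2) =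
          ENNReal.ofReal (p.1.2 ^ 2 + p.2.2 ^ 2) :=
        (ENNReal.ofReal_add (sq_nonneg _) (sq_nonneg _)).symm
      by_cases hD : p ∈ D₁ ∪ D₂
      · rw [Set.indicator_of_mem hD, hfg,
          ← ENNReal.ofReal_add (coneCost_nonneg _ _) (by positivity)]
        exact ENNReal.ofReal_le_ofReal (coneCost_ge p.1 p.2)
      · rw [Set.indicator_of_notMem hD, add_zero, hfg]
        apply ENNReal.ofReal_le_ofReal
        have hx : p.1.2 = 0 ∨ p.1.1 = x₁ ∨ p.1.1 = x₂ := by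
          by_cases e1' : p.1.1 = x₁
          · exact Or.inr (Or.inl e1')
          by_cases e2' : p.1.1 = x₂
          · exact Or.inr (Or.inr e2')
          exact Or.inl (hpA e1' e2')
        have hy : p.2.2 = 0 ∨ p.2.1 = x₁ ∨ p.2.1 = x₂ := by
          by_cases e1' : p.2.1 = x₁
          · exact Or.inr (Or.inl e1')
          by_cases e2' : p.2.1 = x₂
          · exact Or.inr (Or.inr e2')
          exact Or.inl (hpB e1' e2')
        have hz : 2 * p.1.2 * p.2.2 * Real.cos (min (dist p.1.1 p.2.1) π) = 0 := by
          rcases hx with h | h | h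
          · rw [h]; ring
          · rcases hy with h' | h' | h'
            · rw [h']; ring
            · exact absurd (show p ∈ D₁ ∪ D₂ from Or.inl ⟨h, h'⟩) hD
            · rw [h, h', hd, min_eq_left pi2, Real.cos_pi_div_two]; ring
          · rcases hy with h' | h' | h'
            · rw [h']; ring
            · rw [h, h', dist_comm, hd, min_eq_left pi2, Real.cos_pi_div_two]; ring
            · exact absurd (show p ∈ D₁ ∪ D₂ from Or.inr ⟨h, h'⟩) hD
        simp only [coneCost]
        rw [hz]
        linarith
    -- integrate the a.e. inequality
    set I : ℝ≥0∞ := ∫⁻ p, ENNReal.ofReal (coneCost p.1 p.2) ∂α with hI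
    set K : ℝ := 2 * Real.sqrt c₁ * Real.sqrt d₁ + 2 * Real.sqrt c₂ * Real.sqrt d₂ with hK
    have main : ENNReal.ofReal (c₁ + c₂ + (d₁ + d₂)) ≤ I + ENNReal.ofReal K := by
      calc ENNReal.ofReal (c₁ + c₂ + (d₁ + d₂))
          = (ENNReal.ofReal c₁ + ENNReal.ofReal c₂) + (ENNReal.ofReal d₁ + ENNReal.ofReal d₂) := by
            rw [← ENNReal.ofReal_add hc₁ hc₂, ← ENNReal.ofReal_add hd₁ hd₂,
              ← ENNReal.ofReal_add (by positivity) (by positivity)]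
        _ = ∫⁻ p, (ENNReal.ofReal (p.1.2 ^ 2) + ENNReal.ofReal (p.2.2 ^ 2)) ∂α := by
            rw [lintegral_add_left hmf, etot1, etot2]
        _ ≤ ∫⁻ p, (ENNReal.ofReal (coneCost p.1 p.2) +
              (D₁ ∪ D₂).indicator (fun p : Pn n => ENNReal.ofReal (2 * |p.1.2| * |p.2.2|)) p) ∂α :=
            lintegral_mono_ae hae
        _ = I + ∫⁻ p, (D₁ ∪ D₂).indicator
              (fun p : Pn n => ENNReal.ofReal (2 * |p.1.2| * |p.2.2|)) p ∂α := by
            rw [lintegral_add_left hmcost, hI]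
        _ ≤ I + ENNReal.ofReal K := by
            gcongr
            rw [lintegral_indicator mD]
            calc ∫⁻ p in D₁ ∪ D₂, ENNReal.ofReal (2 * |p.1.2| * |p.2.2|) ∂α ≤
                (∫⁻ p in D₁, ENNReal.ofReal (2 * |p.1.2| * |p.2.2|) ∂α) +
                  ∫⁻ p in D₂, ENNReal.ofReal (2 * |p.1.2| * |p.2.2|) ∂α :=
                lintegral_union_le _ _ _
              _ ≤ ENNReal.ofReal (2 * Real.sqrt c₁ * Real.sqrt d₁) +
                  ENNReal.ofReal (2 * Real.sqrt c₂ * Real.sqrt d₂) := add_le_add cross1 cross2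
              _ = ENNReal.ofReal K := by
                  rw [hK, ENNReal.ofReal_add (by positivity) (by positivity)]
    have hsum : ENNReal.ofReal A + ENNReal.ofReal K = ENNReal.ofReal (c₁ + c₂ + (d₁ + d₂)) := by
      rw [← ENNReal.ofReal_add (by rw [hA]; positivity) (by rw [hK]; positivity)]
      congr 1
      rw [hA, hK]
      nlinarith [Real.sq_sqrt hc₁, Real.sq_sqrt hc₂, Real.sq_sqrt hd₁, Real.sq_sqrt hd₂]
    have final : ENNReal.ofReal A + ENNReal.ofReal K ≤ I + ENNReal.ofReal K := by
      rw [hsum]; exact main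
    exact (ENNReal.add_le_add_iff_right ENNReal.ofReal_ne_top).mp final

/-- For Dirac masses at distance `π/2`, the Hellinger curve is a constant speed geodesic
for the Hellinger–Kantorovich distance `HK = √(HK²)`. -/
theorem hellingerCurve_constant_speed_geodesic (n : ℕ)
    (x₁ x₂ : EuclideanSpace ℝ (Fin n)) (a₁ a₂ : ℝ) (h₁ : 0 < a₁) (h₂ : 0 < a₂)
    (hd : dist x₁ x₂ = π / 2) :
    ∀ s ∈ Set.Icc (0 : ℝ) 1, ∀ t ∈ Set.Icc (0 : ℝ) 1,
      Real.sqrt (HK2 (hellingerCurve x₁ x₂ a₁ a₂ s) (hellingerCurve x₁ x₂ a₁ a₂ t)).toReal =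
        |s - t| * Real.sqrt (HK2 (ENNReal.ofReal a₁ • Measure.dirac x₁)
          (ENNReal.ofReal a₂ • Measure.dirac x₂)).toReal := by
  intro s hs t ht
  -- value of the curve HK2
  have key := HK2_two_point n x₁ x₂ hd ((1 - s) ^ 2 * a₁) (s ^ 2 * a₂) ((1 - t) ^ 2 * a₁)
    (t ^ 2 * a₂) (by positivity) (by positivity) (by positivity) (by positivity)
  have hsq : ∀ u : ℝ, 0 ≤ u → 1 - u ≥ 0 → True := fun _ _ _ => trivial
  have sqrt1 : ∀ u a : ℝ, 0 ≤ a → u ∈ Set.Icc (0:ℝ) 1 →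
      Real.sqrt ((1 - u) ^ 2 * a) = (1 - u) * Real.sqrt a := by
    intro u a ha hu
    rw [Real.sqrt_mul (sq_nonneg _), Real.sqrt_sq (by linarith [hu.2])]
  have sqrt2 : ∀ u a : ℝ, 0 ≤ a → u ∈ Set.Icc (0:ℝ) 1 →
      Real.sqrt (u ^ 2 * a) = u * Real.sqrt a := by
    intro u a ha hu
    rw [Real.sqrt_mul (sq_nonneg _), Real.sqrt_sq hu.1]
  rw [sqrt1 s a₁ h₁.le hs, sqrt1 t a₁ h₁.le ht, sqrt2 s a₂ h₂.le hs, sqrt2 t a₂ h₂.le ht] at key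
  have hval : ((1 - s) * Real.sqrt a₁ - (1 - t) * Real.sqrt a₁) ^ 2 +
      (s * Real.sqrt a₂ - t * Real.sqrt a₂) ^ 2 = (s - t) ^ 2 * (a₁ + a₂) := by
    have e1 := Real.sq_sqrt h₁.le
    have e2 := Real.sq_sqrt h₂.le
    nlinarith [e1, e2]
  rw [hval] at key
  -- value of the endpoints HK2
  have ep := HK2_two_point n x₁ x₂ hd a₁ 0 0 a₂ h₁.le le_rfl le_rfl h₂.le
  simp only [ENNReal.ofReal_zero, zero_smul, add_zero, zero_add, Real.sqrt_zero, sub_zero,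
    zero_sub, neg_sq] at ep
  rw [Real.sq_sqrt h₁.le, Real.sq_sqrt h₂.le] at ep
  have hcurve : ∀ u : ℝ, hellingerCurve x₁ x₂ a₁ a₂ u =
      ENNReal.ofReal ((1 - u) ^ 2 * a₁) • Measure.dirac x₁ +
        ENNReal.ofReal (u ^ 2 * a₂) • Measure.dirac x₂ := fun _ => rfl
  rw [hcurve s, hcurve t, key, ep]
  rw [ENNReal.toReal_ofReal (by positivity), ENNReal.toReal_ofReal (by positivity)]
  rw [Real.sqrt_mul (sq_nonneg _), Real.sqrt_sq_eq_abs]
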